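/- arXiv:1807.11167 — 2 statements merged into one kernel-verified Lean document; each statement's English description precedes it below -/
import Mathlib

section
/- Affine subgroup identification: there is a bijection Ψ between the set of all subgroups of AFF(ℝⁿ) and the set Σ of triples (L, V, ξ) where L ≤ GLₙ(ℝ), V ≤ ℝⁿ, and ξ : L → ℝⁿ/V is a vector system (satisfying AV = V for A ∈ L and the cocycle condition ξ(AA') = ξ(A) + Aξ(A')). The inverse map sends (L, V, ξ) to the subgroup {f_{A,u} ∈ AFF(ℝⁿ) : A ∈ L, u ∈ ξ(A)}. -/
open Pointwise

/-- A triple `(L, V, ξ)` where `L ≤ GLₙ(ℝ)`, `V ≤ ℝⁿ`, and `ξ : L → ℝⁿ/V` is an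
`(L,V)`-vector system: each `ξ(A)` is a coset of `V`, `AV = V` for every `A ∈ L`, and the
cocycle condition `ξ(AA') = ξ(A) + Aξ(A')` holds. -/
structure AffineSubgroupData (n : ℕ) where
  L : Subgroup ((Fin n → ℝ) ≃ₗ[ℝ] (Fin n → ℝ))
  V : AddSubgroup (Fin n → ℝ)
  xi : L → Set (Fin n → ℝ)
  coset : ∀ A : L, ∃ u : Fin n → ℝ, xi A = {x | ∃ v ∈ V, x = v + u}
  compat : ∀ A : L, (fun x => (A : (Fin n → ℝ) ≃ₗ[ℝ] (Fin n → ℝ)) x) '' (V : Set (Fin n → ℝ))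
      = (V : Set (Fin n → ℝ))
  cocycle : ∀ A B : L,
      xi (A * B) = xi A + (fun x => (A : (Fin n → ℝ) ≃ₗ[ℝ] (Fin n → ℝ)) x) '' xi B

namespace AffSubId

variable {n : ℕ}

abbrev Aff (n : ℕ) := (Fin n → ℝ) ≃ᵃ[ℝ] (Fin n → ℝ)
abbrev Lin (n : ℕ) := (Fin n → ℝ) ≃ₗ[ℝ] (Fin n → ℝ)

lemma aff_apply (f : Aff n) (x : Fin n → ℝ) : f x = f.linear x + f 0 := by
  have := f.map_vadd (0 : Fin n → ℝ) x
  simpa [vadd_eq_add, add_comm] using this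

lemma aff_ext {f g : Aff n} (h1 : f.linear = g.linear) (h2 : f 0 = g 0) : f = g := by
  apply AffineEquiv.ext
  intro x
  rw [aff_apply f x, aff_apply g x, h1, h2]

noncomputable def mk' (A : Lin n) (u : Fin n → ℝ) : Aff n :=
  A.toAffineEquiv.trans (AffineEquiv.constVAdd ℝ (Fin n → ℝ) u)

lemma mk'_linear (A : Lin n) (u : Fin n → ℝ) : (mk' A u).linear = A := rfl

lemma mk'_apply (A : Lin n) (u x : Fin n → ℝ) : mk' A u x = u + A x := rfl

lemma mk'_zero (A : Lin n) (u : Fin n → ℝ) : mk' A u 0 = u := by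
  simp [mk'_apply]

lemma mul_linear (f g : Aff n) : (f * g).linear = f.linear * g.linear := rfl
lemma mul_apply' (f g : Aff n) (x : Fin n → ℝ) : (f * g) x = f (g x) := rfl
lemma inv_linear (f : Aff n) : (f⁻¹).linear = f.linear⁻¹ := rfl
lemma lin_inv_apply (A : Lin n) (x : Fin n → ℝ) : A⁻¹ x = A.symm x := rfl
lemma one_linear : ((1 : Aff n)).linear = 1 := rfl
lemma one_apply' (x : Fin n → ℝ) : (1 : Aff n) x = x := rfl

lemma inv_apply_zero (f : Aff n) : f⁻¹ 0 = -(f.linear.symm (f 0)) := by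
  have h : f (f⁻¹ 0) = 0 := f.apply_symm_apply 0
  rw [aff_apply] at h
  have h2 : f.linear (f⁻¹ 0) = -(f 0) := eq_neg_of_add_eq_zero_left h
  have := congrArg f.linear.symm h2
  rw [f.linear.symm_apply_apply] at this
  rw [this, map_neg]

variable (σ : AffineSubgroupData n)

lemma xi_nonempty (A : σ.L) : ∃ u, u ∈ σ.xi A := by
  obtain ⟨u, hu⟩ := σ.coset A
  exact ⟨u, by rw [hu]; exact ⟨0, σ.V.zero_mem, by simp⟩⟩

lemma mem_xi_iff {A : σ.L} {u : Fin n → ℝ} (hu : u ∈ σ.xi A) {x : Fin n → ℝ} :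
    x ∈ σ.xi A ↔ x - u ∈ σ.V := by
  obtain ⟨u', h⟩ := σ.coset A
  rw [h] at hu ⊢
  obtain ⟨v0, hv0, rfl⟩ := hu
  constructor
  · rintro ⟨v, hv, rfl⟩
    have hx : v + u' - (v0 + u') = v - v0 := by abel
    rw [hx]; exact sub_mem hv hv0
  · intro hx
    exact ⟨x - (v0 + u') + v0, add_mem hx hv0, by abel⟩

lemma zero_mem_xi_one : (0 : Fin n → ℝ) ∈ σ.xi 1 := by
  obtain ⟨u, hu⟩ := xi_nonempty σ 1
  have h := σ.cocycle 1 1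
  rw [one_mul] at h
  have himg : (fun x => ((1 : σ.L) : Lin n) x) '' σ.xi 1 = σ.xi 1 := by
    simp
  rw [himg] at h
  have hu2 : u ∈ σ.xi 1 + σ.xi 1 := h ▸ hu
  obtain ⟨a, ha, b, hb, hab⟩ := hu2
  have hva := (mem_xi_iff σ hu).mp ha
  have hvb := (mem_xi_iff σ hu).mp hb
  rw [mem_xi_iff σ hu]
  have hab' : a + b = u := hab
  have hx : (0 : Fin n → ℝ) - u = (a - u) + (b - u) := by rw [← hab']; abel
  rw [hx]; exact add_mem hva hvb

lemma xi_one_eq : σ.xi 1 = (σ.V : Set (Fin n → ℝ)) := by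
  ext x
  rw [mem_xi_iff σ (zero_mem_xi_one σ)]
  simp

noncomputable def toSub (σ : AffineSubgroupData n) : Subgroup (Aff n) where
  carrier := {f | ∃ hA : f.linear ∈ σ.L, f 0 ∈ σ.xi ⟨f.linear, hA⟩}
  one_mem' := ⟨σ.L.one_mem, zero_mem_xi_one σ⟩
  mul_mem' := by
    rintro f g ⟨hf, huf⟩ ⟨hg, hug⟩
    refine ⟨σ.L.mul_mem hf hg, ?_⟩
    have hco := σ.cocycle ⟨f.linear, hf⟩ ⟨g.linear, hg⟩
    have heq : (⟨(f * g).linear, σ.L.mul_mem hf hg⟩ : σ.L)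
        = (⟨f.linear, hf⟩ : σ.L) * ⟨g.linear, hg⟩ := rfl
    rw [heq, hco]
    refine ⟨f 0, huf, f.linear (g 0), ⟨g 0, hug, rfl⟩, ?_⟩
    rw [mul_apply', aff_apply f (g 0)]
    exact add_comm _ _
  inv_mem' := by
    rintro f ⟨hf, hu⟩
    refine ⟨σ.L.inv_mem hf, ?_⟩
    set A : σ.L := ⟨f.linear, hf⟩ with hA
    obtain ⟨u', hu'⟩ := xi_nonempty σ A⁻¹
    have hco := σ.cocycle A⁻¹ A
    rw [inv_mul_cancel] at hco
    have hmem : u' + (A⁻¹ : σ.L).val (f 0) ∈ σ.xi 1 := by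
      rw [hco]
      exact ⟨u', hu', (A⁻¹ : σ.L).val (f 0), ⟨f 0, hu, rfl⟩, rfl⟩
    rw [xi_one_eq σ] at hmem
    have hinv : (A⁻¹ : σ.L).val (f 0) = f.linear.symm (f 0) := rfl
    have heq2 : (⟨(f⁻¹).linear, σ.L.inv_mem hf⟩ : σ.L) = A⁻¹ := rfl
    rw [heq2, mem_xi_iff σ hu', inv_apply_zero]
    have hx : -(f.linear.symm (f 0)) - u' = -(u' + (A⁻¹ : σ.L).val (f 0)) := by
      rw [hinv]; abel
    rw [hx]
    exact neg_mem hmem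

lemma mem_toSub_iff (f : Aff n) :
    f ∈ toSub σ ↔ ∃ hA : f.linear ∈ σ.L, f 0 ∈ σ.xi ⟨f.linear, hA⟩ := Iff.rfl

lemma mk'_mem_toSub_iff (A : Lin n) (u : Fin n → ℝ) :
    mk' A u ∈ toSub σ ↔ ∃ hA : A ∈ σ.L, u ∈ σ.xi ⟨A, hA⟩ := by
  rw [mem_toSub_iff]
  simp only [mk'_linear, mk'_zero]

lemma linear_mem_iff (A : Lin n) :
    A ∈ σ.L ↔ ∃ u, mk' A u ∈ toSub σ := by
  constructor
  · intro hA
    obtain ⟨u, hu⟩ := xi_nonempty σ ⟨A, hA⟩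
    exact ⟨u, (mk'_mem_toSub_iff σ A u).mpr ⟨hA, hu⟩⟩
  · rintro ⟨u, hu⟩
    exact ((mk'_mem_toSub_iff σ A u).mp hu).1

lemma toSub_injective : Function.Injective (toSub (n := n)) := by
  intro σ σ' h
  have hL : σ.L = σ'.L := by
    ext A
    rw [linear_mem_iff σ A, linear_mem_iff σ' A, h]
  obtain ⟨L, V, xi, c1, c2, c3⟩ := σ
  obtain ⟨L', V', xi', c1', c2', c3'⟩ := σ'
  simp only at hL
  subst hL
  have hxi : xi = xi' := by
    funext A
    ext u
    have h1 := mk'_mem_toSub_iff ⟨L, V, xi, c1, c2, c3⟩ A.val u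
    have h2 := mk'_mem_toSub_iff ⟨L, V', xi', c1', c2', c3'⟩ A.val u
    rw [h] at h1
    constructor
    · intro hu
      obtain ⟨hA, hu'⟩ := h2.mp (h1.mpr ⟨A.2, by simpa using hu⟩)
      simpa using hu'
    · intro hu
      obtain ⟨hA, hu'⟩ := h1.mp (h2.mpr ⟨A.2, by simpa using hu⟩)
      simpa using hu'
  subst hxi
  have hV : V = V' := by
    have e1 := xi_one_eq ⟨L, V, xi, c1, c2, c3⟩
    have e2 := xi_one_eq ⟨L, V', xi, c1', c2', c3'⟩
    simp only at e1 e2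
    ext v
    rw [← SetLike.mem_coe, ← SetLike.mem_coe, ← e1, ← e2]
  subst hV
  rfl

noncomputable def ofSubL (H : Subgroup (Aff n)) : Subgroup (Lin n) where
  carrier := {A | ∃ f ∈ H, f.linear = A}
  one_mem' := ⟨1, H.one_mem, rfl⟩
  mul_mem' := by
    rintro A B ⟨f, hf, rfl⟩ ⟨g, hg, rfl⟩
    exact ⟨f * g, H.mul_mem hf hg, rfl⟩
  inv_mem' := by
    rintro A ⟨f, hf, rfl⟩
    exact ⟨f⁻¹, H.inv_mem hf, rfl⟩

lemma mk'_one_zero : mk' (1 : Lin n) 0 = 1 := by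
  apply aff_ext <;> simp [mk'_linear, mk'_zero, one_linear, one_apply']

lemma mk'_one_add (v w : Fin n → ℝ) : mk' (1:Lin n) (v + w) = mk' 1 v * mk' 1 w := by
  apply aff_ext
  · rfl
  · rw [mk'_zero, mul_apply', mk'_zero, mk'_apply]
    rfl

lemma mk'_one_neg (v : Fin n → ℝ) : mk' (1:Lin n) (-v) = (mk' 1 v)⁻¹ := by
  refine eq_inv_of_mul_eq_one_right ?_
  rw [← mk'_one_add]
  simp [mk'_one_zero]

noncomputable def ofSubV (H : Subgroup (Aff n)) : AddSubgroup (Fin n → ℝ) where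
  carrier := {v | mk' 1 v ∈ H}
  zero_mem' := by simp only [Set.mem_setOf_eq, mk'_one_zero]; exact H.one_mem
  add_mem' := by
    intro v w hv hw
    simp only [Set.mem_setOf_eq, mk'_one_add]
    exact H.mul_mem hv hw
  neg_mem' := by
    intro v hv
    simp only [Set.mem_setOf_eq, mk'_one_neg]
    exact H.inv_mem hv

lemma conj_translation (f : Aff n) (v : Fin n → ℝ) :
    f * mk' 1 v * f⁻¹ = mk' 1 (f.linear v) := by
  apply aff_ext
  · rw [mul_linear, mul_linear, inv_linear, mk'_linear, mk'_linear, mul_one, mul_inv_cancel]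
  · rw [mk'_zero, mul_apply', mul_apply', mk'_apply]
    have h1 : v + (1:Lin n) (f⁻¹ 0) = v +ᵥ (f⁻¹ 0) := rfl
    have h0 : f (f⁻¹ 0) = 0 := f.apply_symm_apply 0
    rw [h1, f.map_vadd, h0]
    simp [vadd_eq_add]

lemma translation_part (f : Aff n) : mk' f.linear (f 0) = f := by
  apply aff_ext
  · rw [mk'_linear]
  · rw [mk'_zero]

noncomputable def ofSub (H : Subgroup (Aff n)) : AffineSubgroupData n where
  L := ofSubL H
  V := ofSubV H
  xi := fun A => {u | mk' A.val u ∈ H}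
  coset := by
    rintro ⟨A, f, hf, rfl⟩
    refine ⟨f 0, ?_⟩
    ext x
    simp only [Set.mem_setOf_eq]
    constructor
    · intro hx
      refine ⟨x - f 0, ?_, by abel⟩
      have hkey : mk' f.linear x * f⁻¹ = mk' 1 (x - f 0) := by
        apply aff_ext
        · rw [mul_linear, inv_linear, mk'_linear, mk'_linear, mul_inv_cancel]
        · rw [mk'_zero, mul_apply', mk'_apply, inv_apply_zero, map_neg,
            f.linear.apply_symm_apply]
          abel
      show mk' 1 (x - f 0) ∈ H
      rw [← hkey]
      exact H.mul_mem hx (H.inv_mem hf)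
    · rintro ⟨v, hv, rfl⟩
      have hkey : mk' f.linear (v + f 0) = mk' 1 v * f := by
        apply aff_ext
        · rw [mk'_linear, mul_linear, mk'_linear, one_mul]
        · rw [mk'_zero, mul_apply', mk'_apply]
          rfl
      show mk' f.linear (v + f 0) ∈ H
      rw [hkey]
      exact H.mul_mem hv hf
  compat := by
    rintro ⟨A, f, hf, rfl⟩
    ext w
    constructor
    · rintro ⟨v, hv, rfl⟩
      show mk' 1 (f.linear v) ∈ H
      rw [← conj_translation]
      exact H.mul_mem (H.mul_mem hf hv) (H.inv_mem hf)
    · intro hw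
      refine ⟨f.linear.symm w, ?_, f.linear.apply_symm_apply w⟩
      show mk' 1 (f.linear.symm w) ∈ H
      have : f.linear.symm w = (f⁻¹).linear w := rfl
      rw [this, ← conj_translation]
      exact H.mul_mem (H.mul_mem (H.inv_mem hf) hw) (H.inv_mem (H.inv_mem hf))
  cocycle := by
    rintro A B
    obtain ⟨g, hg, hgB⟩ := B.2
    ext u
    constructor
    · intro hu
      have hu' : mk' (A.val * B.val) u ∈ H := hu
      have hmem : mk' (A.val * B.val) u * g⁻¹ ∈ H := H.mul_mem hu' (H.inv_mem hg)
      set h := mk' (A.val * B.val) u * g⁻¹ with hh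
      have hlin : h.linear = A.val := by
        rw [hh, mul_linear, inv_linear, mk'_linear, hgB]
        group
      have hval : mk' A.val (h 0) = h := by
        rw [← hlin]; exact translation_part h
      have h1 : h 0 ∈ {u | mk' A.val u ∈ H} := by
        show mk' A.val (h 0) ∈ H
        rw [hval]; exact hmem
      have h2 : g 0 ∈ {u | mk' B.val u ∈ H} := by
        show mk' B.val (g 0) ∈ H
        rw [← hgB, translation_part]; exact hg
      have hhg : h * g = mk' (A.val * B.val) u := by
        rw [hh, inv_mul_cancel_right]
      have hu0 : u = h 0 + A.val (g 0) := by
        have h3 := congrArg (fun (k : Aff n) => k 0) hhg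
        simp only [mk'_zero] at h3
        rw [← h3, mul_apply', aff_apply h (g 0), hlin]
        exact add_comm _ _
      exact ⟨h 0, h1, A.val (g 0), ⟨g 0, h2, rfl⟩, hu0.symm⟩
    · rintro ⟨a, ha, w, ⟨b, hb, rfl⟩, rfl⟩
      have hkey : mk' (A.val * B.val) (a + A.val b) = mk' A.val a * mk' B.val b := by
        apply aff_ext
        · rfl
        · rw [mk'_zero, mul_apply', mk'_zero, mk'_apply]
      show mk' (A.val * B.val) (a + A.val b) ∈ H
      rw [hkey]
      exact H.mul_mem ha hb

lemma toSub_ofSub (H : Subgroup (Aff n)) : toSub (ofSub H) = H := by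
  ext f
  rw [mem_toSub_iff]
  constructor
  · rintro ⟨hA, hu⟩
    have : mk' f.linear (f 0) ∈ H := hu
    rwa [translation_part] at this
  · intro hf
    refine ⟨⟨f, hf, rfl⟩, ?_⟩
    show mk' f.linear (f 0) ∈ H
    rwa [translation_part]

lemma toSub_bijective : Function.Bijective (toSub (n := n)) :=
  ⟨toSub_injective, fun H => ⟨ofSub H, toSub_ofSub H⟩⟩

end AffSubId

/-- Affine subgroup identification: there is a bijection `Ψ` between the set of all subgroups of
`AFF(ℝⁿ)` and the set `Σ` of triples `(L, V, ξ)` with `L ≤ GLₙ(ℝ)`, `V ≤ ℝⁿ` and `ξ` an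
`(L,V)`-vector system; the inverse sends `(L, V, ξ)` to the subgroup
`{f_{A,u} : A ∈ L, u ∈ ξ(A)}` (where `u = f(0)` is the translation part of `f`). -/
theorem affine_subgroup_identification (n : ℕ) :
    ∃ Ψ : Subgroup ((Fin n → ℝ) ≃ᵃ[ℝ] (Fin n → ℝ)) ≃ AffineSubgroupData n,
      ∀ (σ : AffineSubgroupData n) (f : (Fin n → ℝ) ≃ᵃ[ℝ] (Fin n → ℝ)),
        f ∈ Ψ.symm σ ↔ ∃ hA : f.linear ∈ σ.L, f 0 ∈ σ.xi ⟨f.linear, hA⟩ := by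
  refine ⟨(Equiv.ofBijective AffSubId.toSub AffSubId.toSub_bijective).symm, fun σ f => ?_⟩
  rw [Equiv.symm_symm]
  exact AffSubId.mem_toSub_iff σ f
end

section
/- Every isometry of ℤⁿ (with respect to the Euclidean distance restricted to ℤⁿ) is the restriction of an isometry of ℝⁿ that stabilizes ℤⁿ setwise; conversely, every such restriction is an isometry of ℤⁿ. Hence ISO(ℤⁿ) = ISO(ℝⁿ)_{ℤⁿ}|_{ℤⁿ}. In particular, every isometry h of ℤⁿ is of the form h(x) = Ax + u with A ∈ Oₙ(ℤ) (an orthogonal matrix with integer entries) and u ∈ ℤⁿ. -/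
open Finset Matrix

/-- The canonical embedding `ℤⁿ → ℝⁿ`. -/
def intVec (n : ℕ) (z : Fin n → ℤ) : Fin n → ℝ := fun i => (z i : ℝ)

/-- The integer lattice `ℤⁿ` viewed as a subset of `ℝⁿ`. -/
def intLattice (n : ℕ) : Set (Fin n → ℝ) := Set.range (intVec n)

section Aux
variable {n : ℕ}

/-- Polarization identity for sums over a commutative ring. -/
lemma polar (a b : Fin n → ℤ) :
    ∑ i, (a i - b i) ^ 2 = ∑ i, (a i) ^ 2 + ∑ i, (b i) ^ 2 - 2 * ∑ i, a i * b i := by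
  rw [Finset.mul_sum, ← Finset.sum_add_distrib, ← Finset.sum_sub_distrib]
  apply Finset.sum_congr rfl
  intro i _
  ring

lemma ip_preserved (h : (Fin n → ℤ) → (Fin n → ℤ))
    (H : ∀ x y, ∑ i, (h x i - h y i) ^ 2 = ∑ i, (x i - y i) ^ 2) (x y : Fin n → ℤ) :
    ∑ i, (h x i - h 0 i) * (h y i - h 0 i) = ∑ i, x i * y i := by
  have h1 := H x 0
  have h2 := H y 0
  have h3 := H x y
  have e1 : ∑ i, (h x i - h y i) ^ 2
      = ∑ i, ((h x i - h 0 i) - (h y i - h 0 i)) ^ 2 := by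
    apply Finset.sum_congr rfl; intro i _; ring
  rw [e1, polar (fun i => h x i - h 0 i) (fun i => h y i - h 0 i)] at h3
  rw [polar x y] at h3
  simp only [Pi.zero_apply, sub_zero] at h1 h2
  have p1 : ∑ i, (h x i - h 0 i) ^ 2 = ∑ i, (x i) ^ 2 := h1
  have p2 : ∑ i, (h y i - h 0 i) ^ 2 = ∑ i, (y i) ^ 2 := h2
  linarith

lemma exists_affine (h : (Fin n → ℤ) → (Fin n → ℤ))
    (H : ∀ x y, ∑ i, (h x i - h y i) ^ 2 = ∑ i, (x i - y i) ^ 2) :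
    ∃ (A : Matrix (Fin n) (Fin n) ℤ),
      A.transpose * A = 1 ∧ ∀ x : Fin n → ℤ, h x = A.mulVec x + h 0 := by
  set f : (Fin n → ℤ) → (Fin n → ℤ) := fun x i => h x i - h 0 i with hf
  have ip : ∀ x y, ∑ i, f x i * f y i = ∑ i, x i * y i := ip_preserved h H
  set A : Matrix (Fin n) (Fin n) ℤ := Matrix.of (fun i j => f ((Pi.single j 1 : Fin n → ℤ)) i) with hA
  have dot_single : ∀ (x : Fin n → ℤ) (k : Fin n), ∑ i, x i * (Pi.single k 1 : Fin n → ℤ) i = x k := by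
    intro x k
    simp [Pi.single_apply, mul_ite, Finset.sum_ite_eq']
  have hAtA : A.transpose * A = 1 := by
    ext i j
    rw [Matrix.mul_apply, Matrix.one_apply]
    simp only [Matrix.transpose_apply, hA, Matrix.of_apply]
    rw [ip ((Pi.single i 1 : Fin n → ℤ)) ((Pi.single j 1 : Fin n → ℤ)), dot_single]
    simp [Pi.single_apply, eq_comm]
  have hvecMul : ∀ x : Fin n → ℤ, Matrix.vecMul (f x) A = x := by
    intro x
    funext k
    show ∑ j, f x j * A j k = x k
    rw [show ∑ j, f x j * A j k = ∑ j, f x j * f ((Pi.single k 1 : Fin n → ℤ)) j from rfl,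
      ip x ((Pi.single k 1 : Fin n → ℤ)), dot_single]
  refine ⟨A, hAtA, fun x => ?_⟩
  have key : f x = A.mulVec x := by
    have hz : ∑ j, (f x j - A.mulVec x j) ^ 2 = 0 := by
      rw [polar (f x) (A.mulVec x)]
      have t1 : ∑ i, f x i * f x i = ∑ i, x i * x i := ip x x
      have t2 : ∑ j, f x j * A.mulVec x j = ∑ i, x i * x i := by
        have := Matrix.dotProduct_mulVec (f x) A x
        rw [hvecMul x] at this
        simpa [dotProduct] using this
      have t3 : ∑ j, A.mulVec x j * A.mulVec x j = ∑ i, x i * x i := by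
        have : A.mulVec x ⬝ᵥ A.mulVec x = x ⬝ᵥ x :=
          calc A.mulVec x ⬝ᵥ A.mulVec x = Matrix.vecMul (A.mulVec x) A ⬝ᵥ x :=
                Matrix.dotProduct_mulVec _ _ _
            _ = Matrix.vecMul (Matrix.vecMul x A.transpose) A ⬝ᵥ x := by
                rw [Matrix.vecMul_transpose]
            _ = Matrix.vecMul x (A.transpose * A) ⬝ᵥ x := by rw [Matrix.vecMul_vecMul]
            _ = x ⬝ᵥ x := by rw [hAtA, Matrix.vecMul_one]
        simpa [dotProduct] using this
      have sq : ∀ (v : Fin n → ℤ), ∑ i, v i ^ 2 = ∑ i, v i * v i := by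
        intro v; apply Finset.sum_congr rfl; intros; ring
      rw [sq, sq, t1, t3, t2]
      ring
    funext j
    have hnn : ∀ i ∈ Finset.univ, (0:ℤ) ≤ (f x i - A.mulVec x i) ^ 2 := by
      intros; positivity
    have := (Finset.sum_eq_zero_iff_of_nonneg hnn).mp hz j (Finset.mem_univ j)
    have := pow_eq_zero_iff (n := 2) (by norm_num) |>.mp this
    linarith [this]
  funext i
  have : f x i = A.mulVec x i := by rw [key]
  simp only [hf] at this
  have : h x i = A.mulVec x i + h 0 i := by linarith
  simpa using this

lemma real_iso (B : Matrix (Fin n) (Fin n) ℝ) (hB : B.transpose * B = 1)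
    (d : Fin n → ℝ) : ∑ i, (B.mulVec d i) ^ 2 = ∑ i, d i ^ 2 := by
  have key : B.mulVec d ⬝ᵥ B.mulVec d = d ⬝ᵥ d :=
    calc B.mulVec d ⬝ᵥ B.mulVec d = Matrix.vecMul (B.mulVec d) B ⬝ᵥ d :=
          Matrix.dotProduct_mulVec _ _ _
      _ = Matrix.vecMul (Matrix.vecMul d B.transpose) B ⬝ᵥ d := by
          rw [Matrix.vecMul_transpose]
      _ = Matrix.vecMul d (B.transpose * B) ⬝ᵥ d := by rw [Matrix.vecMul_vecMul]
      _ = d ⬝ᵥ d := by rw [hB, Matrix.vecMul_one]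
  have sq : ∀ (v : Fin n → ℝ), ∑ i, v i ^ 2 = v ⬝ᵥ v := by
    intro v; simp [dotProduct, pow_two]
  rw [sq, sq, key]

lemma cast_mulVec (A : Matrix (Fin n) (Fin n) ℤ) (z : Fin n → ℤ) :
    (A.map (Int.cast : ℤ → ℝ)).mulVec (intVec n z) = intVec n (A.mulVec z) := by
  funext i
  simp [Matrix.mulVec, dotProduct, intVec]


end Aux



/-- `ISO(ℤⁿ) = ISO(ℝⁿ)_{ℤⁿ}|_{ℤⁿ}`: (1) every isometry `h` of `ℤⁿ` (a map preserving the
Euclidean distance, expressed via squared distances) is the restriction of a bijective isometry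
of `ℝⁿ` stabilizing `ℤⁿ` setwise, and is of the form `h(x) = Ax + u` with `A ∈ Oₙ(ℤ)` and
`u ∈ ℤⁿ`; and (2) conversely, the restriction to `ℤⁿ` of any bijective isometry of `ℝⁿ`
stabilizing `ℤⁿ` is an isometry of `ℤⁿ`. -/
theorem iso_int_lattice_eq_restricted_stabilizer (n : ℕ) :
    (∀ h : (Fin n → ℤ) → (Fin n → ℤ),
      (∀ x y : Fin n → ℤ, ∑ i, (h x i - h y i) ^ 2 = ∑ i, (x i - y i) ^ 2) →
      ((∃ g : (Fin n → ℝ) → (Fin n → ℝ), Function.Bijective g ∧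
          (∀ x y : Fin n → ℝ, ∑ i, (g x i - g y i) ^ 2 = ∑ i, (x i - y i) ^ 2) ∧
          g '' intLattice n = intLattice n ∧
          (∀ z : Fin n → ℤ, g (intVec n z) = intVec n (h z))) ∧
        (∃ (A : Matrix (Fin n) (Fin n) ℤ) (u : Fin n → ℤ),
          A.transpose * A = 1 ∧ ∀ x : Fin n → ℤ, h x = A.mulVec x + u))) ∧
    (∀ g : (Fin n → ℝ) → (Fin n → ℝ), Function.Bijective g →
      (∀ x y : Fin n → ℝ, ∑ i, (g x i - g y i) ^ 2 = ∑ i, (x i - y i) ^ 2) →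
      g '' intLattice n = intLattice n →
      ∀ h : (Fin n → ℤ) → (Fin n → ℤ),
        (∀ z : Fin n → ℤ, g (intVec n z) = intVec n (h z)) →
        ∀ x y : Fin n → ℤ, ∑ i, (h x i - h y i) ^ 2 = ∑ i, (x i - y i) ^ 2) := by
  constructor
  · intro h H
    obtain ⟨A, hAtA, hform⟩ := exists_affine h H
    have hAAt : A * A.transpose = 1 := mul_eq_one_comm.mp hAtA
    set B : Matrix (Fin n) (Fin n) ℝ := A.map (Int.cast : ℤ → ℝ) with hBdef
    have hBtB : B.transpose * B = 1 := by
      ext i j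
      have h1 : (A.transpose * A) i j = (1 : Matrix (Fin n) (Fin n) ℤ) i j := by rw [hAtA]
      rw [Matrix.mul_apply] at h1
      have h2 := congrArg (Int.cast : ℤ → ℝ) h1
      push_cast at h2
      simp only [Matrix.mul_apply, Matrix.transpose_apply, hBdef, Matrix.map_apply,
        Matrix.one_apply, Matrix.transpose_apply] at h2 ⊢
      rw [h2]
      split <;> simp
    set c : Fin n → ℝ := intVec n (h 0) with hcdef
    set g : (Fin n → ℝ) → (Fin n → ℝ) := fun v => B.mulVec v + c with hgdef
    have hg_agree : ∀ z : Fin n → ℤ, g (intVec n z) = intVec n (h z) := by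
      intro z
      rw [hform z]
      show B.mulVec (intVec n z) + c = intVec n (A.mulVec z + h 0)
      rw [cast_mulVec]
      funext i
      simp [intVec, hcdef]
    constructor
    · refine ⟨g, ?_, ?_, ?_, hg_agree⟩
      · -- bijective
        have : Function.LeftInverse (fun v => B.transpose.mulVec (v - c)) g ∧
            Function.RightInverse (fun v => B.transpose.mulVec (v - c)) g := by
          constructor
          · intro v
            show B.transpose.mulVec (B.mulVec v + c - c) = v
            rw [add_sub_cancel_right, Matrix.mulVec_mulVec, hBtB, Matrix.one_mulVec]
          · intro v
            show B.mulVec (B.transpose.mulVec (v - c)) + c = v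
            have hBBt : B * B.transpose = 1 := mul_eq_one_comm.mp hBtB
            rw [Matrix.mulVec_mulVec, hBBt, Matrix.one_mulVec, sub_add_cancel]
        exact ⟨this.1.injective, this.2.surjective⟩
      · -- isometry
        intro x y
        have : ∀ i, g x i - g y i = B.mulVec (x - y) i := by
          intro i
          simp [hgdef, Matrix.mulVec_sub]
        calc ∑ i, (g x i - g y i) ^ 2 = ∑ i, (B.mulVec (x - y) i) ^ 2 := by
              apply Finset.sum_congr rfl; intro i _; rw [this i]
          _ = ∑ i, (x - y) i ^ 2 := real_iso B hBtB _
          _ = ∑ i, (x i - y i) ^ 2 := rfl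
      · -- lattice stability
        apply Set.eq_of_subset_of_subset
        · rintro w ⟨v, ⟨z, rfl⟩, rfl⟩
          exact ⟨h z, (hg_agree z).symm⟩
        · rintro w ⟨z, rfl⟩
          refine ⟨intVec n (A.transpose.mulVec (z - h 0)), ⟨_, rfl⟩, ?_⟩
          rw [hg_agree, hform]
          rw [Matrix.mulVec_mulVec, hAAt, Matrix.one_mulVec, sub_add_cancel]
    · exact ⟨A, h 0, hAtA, hform⟩
  · intro g hgbij hgiso hglat h hagree x y
    have key := hgiso (intVec n x) (intVec n y)
    rw [hagree x, hagree y] at key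
    have : ((∑ i, (h x i - h y i) ^ 2 : ℤ) : ℝ) = ((∑ i, (x i - y i) ^ 2 : ℤ) : ℝ) := by
      push_cast
      simpa [intVec] using key
    exact_mod_cast this
end
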